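/- Let L be a positive semidefinite linear functional on a unital commutative ℝ-algebra A with L(1)=1 such that v_L(a) < ∞ for all a ∈ A. Then v_L is submultiplicative: v_L(ab) ≤ v_L(a)·v_L(b) for all a, b ∈ A, and v_L(1) = 1. -/

import Mathlib

open MeasureTheory

variable {A : Type*} [CommRing A] [Algebra ℝ A]

/-- The set of ratios `L(a^{2n+2})/L(a^{2n})` over `n` with `L(a^{2n}) ≠ 0`. -/
def ratioSet (L : A →ₗ[ℝ] ℝ) (a : A) : Set ℝ :=
  {r | ∃ n : ℕ, L (a ^ (2 * n)) ≠ 0 ∧ r = L (a ^ (2 * n + 2)) / L (a ^ (2 * n))}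

/-- `v_L(a) = sqrt( sup_{n, L(a^{2n}) ≠ 0} L(a^{2n+2})/L(a^{2n}) )`. -/
noncomputable def vL (L : A →ₗ[ℝ] ℝ) (a : A) : ℝ :=
  Real.sqrt (sSup (ratioSet L a))

lemma cs (L : A →ₗ[ℝ] ℝ) (hpsd : ∀ x : A, 0 ≤ L (x ^ 2)) (x y : A) :
    L (x * y) ^ 2 ≤ L (x ^ 2) * L (y ^ 2) := by
  have key : ∀ t : ℝ, 0 ≤ L (y ^ 2) * (t * t) + (2 * L (x * y)) * t + L (x ^ 2) := by
    intro t
    have h := hpsd (x + t • y)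
    have hexp : (x + t • y) ^ 2 = x ^ 2 + (2 * t) • (x * y) + (t ^ 2) • (y ^ 2) := by
      simp only [Algebra.smul_def, map_mul, map_pow, map_ofNat]
      ring
    rw [hexp, map_add, map_add, _root_.map_smul, _root_.map_smul, smul_eq_mul, smul_eq_mul] at h
    nlinarith [h]
  have hd := discrim_le_zero key
  rw [discrim] at hd
  nlinarith [hd]

lemma even_pow_nonneg (L : A →ₗ[ℝ] ℝ) (hpsd : ∀ x : A, 0 ≤ L (x ^ 2)) (a : A) (n : ℕ) :
    0 ≤ L (a ^ (2 * n)) := by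
  have : a ^ (2 * n) = (a ^ n) ^ 2 := by rw [← pow_mul, Nat.mul_comm]
  rw [this]; exact hpsd _

lemma sSup_ratio_nonneg (L : A →ₗ[ℝ] ℝ) (hpsd : ∀ x : A, 0 ≤ L (x ^ 2)) (a : A) :
    0 ≤ sSup (ratioSet L a) := by
  apply Real.sSup_nonneg
  rintro r ⟨n, hn, rfl⟩
  have h1 : 0 ≤ L (a ^ (2 * n + 2)) := by
    have : (2 : ℕ) * n + 2 = 2 * (n + 1) := by ring
    rw [this]; exact even_pow_nonneg L hpsd a (n + 1)
  exact div_nonneg h1 (even_pow_nonneg L hpsd a n)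

/-- zeros propagate and the key growth bound `L(a^{2n}) ≤ s^n`. -/
lemma pow_le_sSup_pow (L : A →ₗ[ℝ] ℝ) (hpsd : ∀ x : A, 0 ≤ L (x ^ 2)) (h1 : L 1 = 1)
    (hfin : ∀ a : A, BddAbove (ratioSet L a)) (a : A) (n : ℕ) :
    L (a ^ (2 * n)) ≤ (sSup (ratioSet L a)) ^ n := by
  set s := sSup (ratioSet L a) with hs
  have hs0 : 0 ≤ s := sSup_ratio_nonneg L hpsd a
  induction n with
  | zero => simp [h1]
  | succ n ih =>
    have hnn := even_pow_nonneg L hpsd a n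
    by_cases hz : L (a ^ (2 * n)) = 0
    · -- zero propagates: L(a^{2n+2}) = 0
      have hcs := cs L hpsd (a ^ n) (a ^ (n + 2))
      have e1 : a ^ n * a ^ (n + 2) = a ^ (2 * (n + 1)) := by rw [← pow_add]; ring_nf
      have e2 : (a ^ n) ^ 2 = a ^ (2 * n) := by rw [← pow_mul, Nat.mul_comm]
      have e3 : (a ^ (n + 2)) ^ 2 = a ^ (2 * n + 4) := by rw [← pow_mul]; ring_nf
      rw [e1, e2, e3, hz, zero_mul] at hcs
      have : L (a ^ (2 * (n + 1))) = 0 := by nlinarith [hcs]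
      rw [this]
      positivity
    · have hpos : 0 < L (a ^ (2 * n)) := lt_of_le_of_ne hnn (Ne.symm hz)
      have hmem : L (a ^ (2 * n + 2)) / L (a ^ (2 * n)) ∈ ratioSet L a := ⟨n, hz, rfl⟩
      have hle : L (a ^ (2 * n + 2)) / L (a ^ (2 * n)) ≤ s := le_csSup (hfin a) hmem
      have h2 : L (a ^ (2 * n + 2)) ≤ s * L (a ^ (2 * n)) := by
        rw [div_le_iff₀ hpos] at hle; linarith [hle]
      have e : (2 : ℕ) * (n + 1) = 2 * n + 2 := by ring
      rw [e]
      calc L (a ^ (2 * n + 2)) ≤ s * L (a ^ (2 * n)) := h2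
        _ ≤ s * s ^ n := by apply mul_le_mul_of_nonneg_left ih hs0
        _ = s ^ (n + 1) := by ring

lemma prod_bound (L : A →ₗ[ℝ] ℝ) (hpsd : ∀ x : A, 0 ≤ L (x ^ 2)) (h1 : L 1 = 1)
    (hfin : ∀ a : A, BddAbove (ratioSet L a)) (a b : A) (N : ℕ) :
    L ((a * b) ^ (2 * N)) ≤ (sSup (ratioSet L a) * sSup (ratioSet L b)) ^ N := by
  set sa := sSup (ratioSet L a)
  set sb := sSup (ratioSet L b)
  have hsa : 0 ≤ sa := sSup_ratio_nonneg L hpsd a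
  have hsb : 0 ≤ sb := sSup_ratio_nonneg L hpsd b
  have hcs := cs L hpsd (a ^ (2 * N)) (b ^ (2 * N))
  have e1 : a ^ (2 * N) * b ^ (2 * N) = (a * b) ^ (2 * N) := (mul_pow a b _).symm
  have e2 : (a ^ (2 * N)) ^ 2 = a ^ (2 * (2 * N)) := by rw [← pow_mul, Nat.mul_comm]
  have e3 : (b ^ (2 * N)) ^ 2 = b ^ (2 * (2 * N)) := by rw [← pow_mul, Nat.mul_comm]
  rw [e1, e2, e3] at hcs
  have ha := pow_le_sSup_pow L hpsd h1 hfin a (2 * N)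
  have hb := pow_le_sSup_pow L hpsd h1 hfin b (2 * N)
  have h0a := even_pow_nonneg L hpsd a (2 * N)
  have h0b := even_pow_nonneg L hpsd b (2 * N)
  have h0c := even_pow_nonneg L hpsd (a * b) N
  have hsq : L ((a * b) ^ (2 * N)) ^ 2 ≤ ((sa * sb) ^ N) ^ 2 := by
    calc L ((a * b) ^ (2 * N)) ^ 2 ≤ L (a ^ (2 * (2 * N))) * L (b ^ (2 * (2 * N))) := hcs
      _ ≤ sa ^ (2 * N) * sb ^ (2 * N) := by
          apply mul_le_mul ha hb h0b (by positivity)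
      _ = ((sa * sb) ^ N) ^ 2 := by rw [← pow_mul]; ring
  nlinarith [hsq, h0c, pow_nonneg (mul_nonneg hsa hsb) N]

lemma ratio_le (L : A →ₗ[ℝ] ℝ) (hpsd : ∀ x : A, 0 ≤ L (x ^ 2)) (h1 : L 1 = 1)
    (hfin : ∀ a : A, BddAbove (ratioSet L a)) (a b : A) :
    ∀ r ∈ ratioSet L (a * b), r ≤ sSup (ratioSet L a) * sSup (ratioSet L b) := by
  rintro r ⟨n, hz, rfl⟩
  set c := a * b
  set s := sSup (ratioSet L a) * sSup (ratioSet L b) with hsdef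
  have hs0 : 0 ≤ s :=
    mul_nonneg (sSup_ratio_nonneg L hpsd a) (sSup_ratio_nonneg L hpsd b)
  have hglob : ∀ N, L (c ^ (2 * N)) ≤ s ^ N := prod_bound L hpsd h1 hfin a b
  by_contra hcon
  push_neg at hcon
  set r := L (c ^ (2 * n + 2)) / L (c ^ (2 * n)) with hrdef
  have hq0 : 0 < L (c ^ (2 * n)) := lt_of_le_of_ne (even_pow_nonneg L hpsd c n) (Ne.symm hz)
  have hr0 : 0 < r := lt_of_le_of_lt hs0 hcon
  have hnum : L (c ^ (2 * n + 2)) = r * L (c ^ (2 * n)) := by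
    rw [hrdef, div_mul_cancel₀ _ hz]
  -- invariant: q_m > 0 and r * q_m ≤ q_{m+1}
  have key : ∀ m : ℕ, 0 < L (c ^ (2 * (n + m))) ∧
      r * L (c ^ (2 * (n + m))) ≤ L (c ^ (2 * (n + m) + 2)) := by
    intro m
    induction m with
    | zero =>
      constructor
      · simpa using hq0
      · simp only [Nat.add_zero]
        rw [hnum]
    | succ m ih =>
      obtain ⟨hp, hst⟩ := ih
      have hp' : 0 < L (c ^ (2 * (n + m) + 2)) := lt_of_lt_of_le (by positivity) hst
      have e : (2 : ℕ) * (n + (m + 1)) = 2 * (n + m) + 2 := by ring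
      refine ⟨by rw [e]; exact hp', ?_⟩
      have hcs := cs L hpsd (c ^ (n + m)) (c ^ (n + m + 2))
      have e1 : c ^ (n + m) * c ^ (n + m + 2) = c ^ (2 * (n + m) + 2) := by
        rw [← pow_add]; ring_nf
      have e2 : (c ^ (n + m)) ^ 2 = c ^ (2 * (n + m)) := by rw [← pow_mul, Nat.mul_comm]
      have e3 : (c ^ (n + m + 2)) ^ 2 = c ^ (2 * (n + m) + 4) := by rw [← pow_mul]; ring_nf
      rw [e1, e2, e3] at hcs
      have e4 : (2 : ℕ) * (n + (m + 1)) + 2 = 2 * (n + m) + 4 := by ring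
      rw [e4, e]
      nlinarith [hcs, hp, hst, hp']
  have geom : ∀ m : ℕ, r ^ m * L (c ^ (2 * n)) ≤ L (c ^ (2 * (n + m))) := by
    intro m
    induction m with
    | zero => simp
    | succ m ih =>
      obtain ⟨hp, hst⟩ := key m
      have e : (2 : ℕ) * (n + (m + 1)) = 2 * (n + m) + 2 := by ring
      rw [e]
      calc r ^ (m + 1) * L (c ^ (2 * n)) = r * (r ^ m * L (c ^ (2 * n))) := by ring
        _ ≤ r * L (c ^ (2 * (n + m))) := by
            exact mul_le_mul_of_nonneg_left ih hr0.le
        _ ≤ L (c ^ (2 * (n + m) + 2)) := hst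
  -- derive contradiction
  by_cases hse : s = 0
  · have := geom 1
    have := hglob (n + 1)
    rw [hse] at this
    simp at this
    nlinarith [geom 1, hglob (n + 1), hq0, hr0, this]
  · have hspos : 0 < s := lt_of_le_of_ne hs0 (Ne.symm hse)
    have hrat : 1 < r / s := (one_lt_div hspos).mpr hcon
    obtain ⟨m, hm⟩ := pow_unbounded_of_one_lt (s ^ n / L (c ^ (2 * n))) hrat
    have hcontr : s ^ n * s ^ m < r ^ m * L (c ^ (2 * n)) := by
      rw [div_pow] at hm
      rw [div_lt_div_iff₀ hq0 (by positivity)] at hm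
      nlinarith [hm]
    have := le_trans (geom m) (hglob (n + m))
    rw [pow_add] at this
    linarith

theorem stmt2 (L : A →ₗ[ℝ] ℝ) (hpsd : ∀ x : A, 0 ≤ L (x ^ 2)) (h1 : L 1 = 1)
    (hfin : ∀ a : A, BddAbove (ratioSet L a)) :
    (∀ a b : A, vL L (a * b) ≤ vL L a * vL L b) ∧ vL L 1 = 1 := by
  constructor
  · intro a b
    unfold vL
    have hsa := sSup_ratio_nonneg L hpsd a
    have hsb := sSup_ratio_nonneg L hpsd b
    have hle : sSup (ratioSet L (a * b)) ≤ sSup (ratioSet L a) * sSup (ratioSet L b) :=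
      Real.sSup_le (ratio_le L hpsd h1 hfin a b) (mul_nonneg hsa hsb)
    calc Real.sqrt (sSup (ratioSet L (a * b)))
        ≤ Real.sqrt (sSup (ratioSet L a) * sSup (ratioSet L b)) := Real.sqrt_le_sqrt hle
      _ = _ := Real.sqrt_mul hsa _
  · have hset : ratioSet L 1 = {1} := by
      ext r
      simp only [ratioSet, Set.mem_setOf_eq, Set.mem_singleton_iff, one_pow, h1]
      constructor
      · rintro ⟨n, hn, rfl⟩; norm_num
      · rintro rfl; exact ⟨0, by norm_num⟩
    rw [vL, hset, csSup_singleton, Real.sqrt_one]
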